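/- Let ρ_0,…,ρ_{M-1} be a quantum state set whose Gram operator G = Σ_m ρ_m is positive definite, let X be a positive semidefinite operator with X ≥ ρ_m for all m, let 0 ≤ p ≤ 1, and set s(a) = Tr X + Tr((aG − X)_+) − a·p for a ≥ 0. If a ≤ λ_min(G^{-1/2} X G^{-1/2}) then s(a) = Tr X − a·p; moreover λ_min(G^{-1/2} X G^{-1/2}) ≥ 1/M. -/

import Mathlib

open Matrix
open scoped ComplexOrder

/-- Positive part `A₊` of a Hermitian matrix (junk value `0` on non-Hermitian input). -/
noncomputable def matPosPart {n : ℕ} (A : Matrix (Fin n) (Fin n) ℂ) : Matrix (Fin n) (Fin n) ℂ :=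
  if hA : A.IsHermitian then
    (hA.eigenvectorUnitary : Matrix (Fin n) (Fin n) ℂ) *
      Matrix.diagonal (fun i => if 0 < hA.eigenvalues i then (hA.eigenvalues i : ℂ) else 0) *
      star (hA.eigenvectorUnitary : Matrix (Fin n) (Fin n) ℂ)
  else 0

/-- Projection `P₍>₎(A)` onto the span of eigenvectors of positive eigenvalues. -/
noncomputable def matProjPos {n : ℕ} (A : Matrix (Fin n) (Fin n) ℂ) : Matrix (Fin n) (Fin n) ℂ :=
  if hA : A.IsHermitian then
    (hA.eigenvectorUnitary : Matrix (Fin n) (Fin n) ℂ) *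
      Matrix.diagonal (fun i => if 0 < hA.eigenvalues i then (1 : ℂ) else 0) *
      star (hA.eigenvectorUnitary : Matrix (Fin n) (Fin n) ℂ)
  else 0

/-- Projection `P₍≥₎(A)` onto the span of eigenvectors of nonnegative eigenvalues. -/
noncomputable def matProjNonneg {n : ℕ} (A : Matrix (Fin n) (Fin n) ℂ) : Matrix (Fin n) (Fin n) ℂ :=
  if hA : A.IsHermitian then
    (hA.eigenvectorUnitary : Matrix (Fin n) (Fin n) ℂ) *
      Matrix.diagonal (fun i => if 0 ≤ hA.eigenvalues i then (1 : ℂ) else 0) *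
      star (hA.eigenvectorUnitary : Matrix (Fin n) (Fin n) ℂ)
  else 0

open scoped Classical in
/-- Positive semidefinite square root (junk value `0` on non-PSD input). -/
noncomputable def matSqrt {n : ℕ} (A : Matrix (Fin n) (Fin n) ℂ) : Matrix (Fin n) (Fin n) ℂ :=
  if hA : A.PosSemidef then
    (hA.1.eigenvectorUnitary : Matrix (Fin n) (Fin n) ℂ) *
      Matrix.diagonal ((↑) ∘ (Real.sqrt ·) ∘ hA.1.eigenvalues : Fin n → ℂ) *
      star (hA.1.eigenvectorUnitary : Matrix (Fin n) (Fin n) ℂ)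
  else 0

open scoped Classical in
/-- Minimum eigenvalue of a Hermitian matrix (junk value `0` on non-Hermitian input). -/
noncomputable def matLambdaMin {n : ℕ} (A : Matrix (Fin n) (Fin n) ℂ) : ℝ :=
  if hA : A.IsHermitian then ⨅ i, hA.eigenvalues i else 0

open scoped Classical in
/-- Maximum eigenvalue of a Hermitian matrix (junk value `0` on non-Hermitian input). -/
noncomputable def matLambdaMax {n : ℕ} (A : Matrix (Fin n) (Fin n) ℂ) : ℝ :=
  if hA : A.IsHermitian then ⨆ i, hA.eigenvalues i else 0

lemma aux_unit_dot {n : ℕ} {A : Matrix (Fin n) (Fin n) ℂ} (hA : A.IsHermitian) (i : Fin n) :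
    dotProduct (star ⇑(hA.eigenvectorBasis i)) ⇑(hA.eigenvectorBasis i) = 1 := by
  have h2 : (inner ℂ (hA.eigenvectorBasis i) (hA.eigenvectorBasis i) : ℂ) = 1 := by
    rw [inner_self_eq_norm_sq_to_K, hA.eigenvectorBasis.orthonormal.1 i]; norm_num
  rw [EuclideanSpace.inner_eq_star_dotProduct, dotProduct_comm] at h2
  exact h2

lemma aux_eig_ge' {n : ℕ} {A : Matrix (Fin n) (Fin n) ℂ} (hA : A.IsHermitian) {c d : ℝ}
    (hd : 0 < d) (h : ((d : ℂ) • A - (c : ℂ) • 1).PosSemidef) (i : Fin n) :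
    c / d ≤ hA.eigenvalues i := by
  have h1 := h.re_dotProduct_nonneg ⇑(hA.eigenvectorBasis i)
  rw [Matrix.sub_mulVec, Matrix.smul_mulVec, Matrix.smul_mulVec, Matrix.one_mulVec,
    dotProduct_sub, dotProduct_smul, dotProduct_smul,
    aux_unit_dot hA i] at h1
  have he := hA.eigenvalues_eq i
  simp only [smul_eq_mul, RCLike.re_to_complex, Complex.sub_re, Complex.mul_re,
    Complex.ofReal_re, Complex.ofReal_im, zero_mul, sub_zero, Complex.one_re, mul_one] at h1
  simp only [RCLike.re_to_complex] at he
  rw [div_le_iff₀ hd, he]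
  nlinarith [h1]

lemma aux_eig_nonpos {n : ℕ} {A : Matrix (Fin n) (Fin n) ℂ} (hA : A.IsHermitian)
    (h : (-A).PosSemidef) (i : Fin n) : hA.eigenvalues i ≤ 0 := by
  have h1 := h.re_dotProduct_nonneg ⇑(hA.eigenvectorBasis i)
  rw [Matrix.neg_mulVec, dotProduct_neg, map_neg] at h1
  rw [hA.eigenvalues_eq i]
  linarith

lemma aux_psd_of_eig {n : ℕ} {A : Matrix (Fin n) (Fin n) ℂ} (hA : A.IsHermitian) {c : ℝ}
    (h : ∀ i, c ≤ hA.eigenvalues i) : (A - (c : ℂ) • 1).PosSemidef := by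
  have hU : (hA.eigenvectorUnitary : Matrix (Fin n) (Fin n) ℂ) *
      star (hA.eigenvectorUnitary : Matrix (Fin n) (Fin n) ℂ) = 1 :=
    (Matrix.mem_unitaryGroup_iff).mp hA.eigenvectorUnitary.2
  have hdiag : Matrix.diagonal (fun i => (hA.eigenvalues i : ℂ) - c) =
      Matrix.diagonal (RCLike.ofReal ∘ hA.eigenvalues) - (c : ℂ) • 1 := by
    rw [smul_one_eq_diagonal, ← Matrix.diagonal_sub]
    rfl
  have key : A - (c : ℂ) • 1 = (hA.eigenvectorUnitary : Matrix (Fin n) (Fin n) ℂ) *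
      Matrix.diagonal (fun i => (hA.eigenvalues i : ℂ) - c) *
      star (hA.eigenvectorUnitary : Matrix (Fin n) (Fin n) ℂ) := by
    conv_lhs => rw [hA.spectral_theorem, Unitary.conjStarAlgAut_apply]
    rw [hdiag, Matrix.mul_sub, Matrix.sub_mul, mul_smul_comm, smul_mul_assoc,
      Matrix.mul_one, hU]
  rw [key]
  have hent : ∀ i, (0 : ℂ) ≤ (hA.eigenvalues i : ℂ) - c := by
    intro i
    rw [show ((hA.eigenvalues i : ℂ) - c) = ((hA.eigenvalues i - c : ℝ) : ℂ) by push_cast; ring]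
    exact_mod_cast sub_nonneg.mpr (h i)
  have := (Matrix.posSemidef_diagonal_iff.mpr hent).mul_mul_conjTranspose_same
    (hA.eigenvectorUnitary : Matrix (Fin n) (Fin n) ℂ)
  rwa [← Matrix.star_eq_conjTranspose] at this

lemma aux_sqrt_psd_mul {n : ℕ} {G : Matrix (Fin n) (Fin n) ℂ} (hG : G.PosSemidef) :
    (matSqrt G).PosSemidef ∧ matSqrt G * matSqrt G = G := by
  rw [matSqrt, dif_pos hG]
  set U := (hG.1.eigenvectorUnitary : Matrix (Fin n) (Fin n) ℂ) with hU0
  set D := Matrix.diagonal ((↑) ∘ (Real.sqrt ·) ∘ hG.1.eigenvalues : Fin n → ℂ) with hD0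
  constructor
  · have hent : ∀ i, (0 : ℂ) ≤ ((↑) ∘ (Real.sqrt ·) ∘ hG.1.eigenvalues : Fin n → ℂ) i := by
      intro i
      simp only [Function.comp_apply]
      exact_mod_cast Real.sqrt_nonneg _
    have := (Matrix.posSemidef_diagonal_iff.mpr hent).mul_mul_conjTranspose_same U
    rwa [← Matrix.star_eq_conjTranspose] at this
  · have hU : star U * U = 1 := Matrix.mem_unitaryGroup_iff'.mp hG.1.eigenvectorUnitary.2
    have hd : D * D = Matrix.diagonal (RCLike.ofReal ∘ hG.1.eigenvalues) := by
      rw [hD0, Matrix.diagonal_mul_diagonal]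
      congr 1
      funext i
      simp only [Function.comp_apply]
      rw [← Complex.ofReal_mul, Real.mul_self_sqrt (hG.eigenvalues_nonneg i)]
      rfl
    conv_rhs => rw [hG.1.spectral_theorem, Unitary.conjStarAlgAut_apply]
    simp only [Matrix.mul_assoc]
    rw [← Matrix.mul_assoc (star U) U, hU, Matrix.one_mul, ← Matrix.mul_assoc D D, hd]

/-- If `a ≤ λ_min(G^{-1/2} X G^{-1/2})` then
`s(a) = Tr X − a·p`; moreover `λ_min(G^{-1/2} X G^{-1/2}) ≥ 1/M`. -/
theorem stmt_10 {n M : ℕ} (hM : 0 < M) (ρ : ℕ → Matrix (Fin n) (Fin n) ℂ)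
    (hρ : ∀ m < M, (ρ m).PosSemidef)
    (hρpos : ∀ m < M, 0 < (ρ m).trace.re)
    (hρsum : ∑ m ∈ Finset.range M, (ρ m).trace.re = 1)
    (G : Matrix (Fin n) (Fin n) ℂ) (hG : G = ∑ m ∈ Finset.range M, ρ m)
    (hGpd : G.PosDef)
    (X : Matrix (Fin n) (Fin n) ℂ) (hX : X.PosSemidef)
    (hXρ : ∀ m < M, (X - ρ m).PosSemidef)
    (p : ℝ) (hp0 : 0 ≤ p) (hp1 : p ≤ 1)
    (a : ℝ) (ha : 0 ≤ a)
    (halam : a ≤ matLambdaMin ((matSqrt G)⁻¹ * X * (matSqrt G)⁻¹)) :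
    X.trace.re + (matPosPart ((a : ℂ) • G - X)).trace.re - a * p = X.trace.re - a * p ∧
    1 / (M : ℝ) ≤ matLambdaMin ((matSqrt G)⁻¹ * X * (matSqrt G)⁻¹) := by
  have hn : n ≠ 0 := by
    intro h
    subst h
    have h0 := hρpos 0 hM
    simp [Matrix.trace] at h0
  haveI : Nonempty (Fin n) := Fin.pos_iff_nonempty.mp (Nat.pos_of_ne_zero hn)
  have hGpsd := hGpd.posSemidef
  have hSdef : (matSqrt G).PosSemidef ∧ matSqrt G * matSqrt G = G := aux_sqrt_psd_mul hGpsd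
  set S := matSqrt G with hS0
  have hSpsd : S.PosSemidef := hSdef.1
  have hSH : S.IsHermitian := hSpsd.1
  have hSS : S * S = G := hSdef.2
  have hdetS : S.det ≠ 0 := by
    intro h
    have h2 : S.det * S.det = G.det := by rw [← Matrix.det_mul, hSS]
    rw [h, mul_zero] at h2
    exact hGpd.det_pos.ne' h2.symm
  have hSu : IsUnit S.det := isUnit_iff_ne_zero.mpr hdetS
  have hinv1 : S⁻¹ * S = 1 := Matrix.nonsing_inv_mul S hSu
  have hinv2 : S * S⁻¹ = 1 := Matrix.mul_nonsing_inv S hSu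
  have hSinvH : S⁻¹.IsHermitian := hSH.inv
  have hSGS : S⁻¹ * G * S⁻¹ = 1 := by
    rw [← hSS, ← Matrix.mul_assoc, hinv1, Matrix.one_mul, hinv2]
  have hY : (S⁻¹ * X * S⁻¹).IsHermitian := by
    have h : (S⁻¹ * X * S⁻¹)ᴴ = S⁻¹ * X * S⁻¹ := by
      rw [Matrix.conjTranspose_mul, Matrix.conjTranspose_mul, hSinvH.eq, hX.1.eq,
        ← Matrix.mul_assoc]
    exact h
  rw [matLambdaMin, dif_pos hY] at halam
  have hBdd : ∀ i, a ≤ hY.eigenvalues i := fun i =>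
    le_trans halam (ciInf_le (Set.finite_range _).bddBelow i)
  have hYpsd : (S⁻¹ * X * S⁻¹ - (a : ℂ) • 1).PosSemidef := aux_psd_of_eig hY hBdd
  have hconj := hYpsd.mul_mul_conjTranspose_same S
  rw [hSH.eq] at hconj
  have hXaG : S * (S⁻¹ * X * S⁻¹ - (a : ℂ) • 1) * S = X - (a : ℂ) • G := by
    rw [Matrix.mul_sub, Matrix.sub_mul]
    congr 1
    · calc S * (S⁻¹ * X * S⁻¹) * S = S * S⁻¹ * X * (S⁻¹ * S) := by
            simp only [Matrix.mul_assoc]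
        _ = X := by rw [hinv2, hinv1, Matrix.one_mul, Matrix.mul_one]
    · rw [mul_smul_comm, smul_mul_assoc, Matrix.mul_one, hSS]
  rw [hXaG] at hconj
  have hAH : ((a : ℂ) • G - X).IsHermitian := by
    have h : ((a : ℂ) • G - X)ᴴ = (a : ℂ) • G - X := by
      rw [Matrix.conjTranspose_sub, Matrix.conjTranspose_smul, hGpd.1.eq, hX.1.eq,
        Complex.star_def, Complex.conj_ofReal]
    exact h
  have hneg : (-((a : ℂ) • G - X)).PosSemidef := by rwa [neg_sub]
  have heig0 : ∀ i, hAH.eigenvalues i ≤ 0 := aux_eig_nonpos hAH hneg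
  have hpp : matPosPart ((a : ℂ) • G - X) = 0 := by
    rw [matPosPart, dif_pos hAH]
    have hfun : (fun i => if 0 < hAH.eigenvalues i then (hAH.eigenvalues i : ℂ) else 0)
        = fun _ => 0 := funext fun i => if_neg (not_lt.mpr (heig0 i))
    rw [hfun]
    simp
  constructor
  · rw [hpp]
    simp
  · rw [matLambdaMin, dif_pos hY]
    have hsum : ((M : ℂ) • X - G).PosSemidef := by
      have heq : ∑ m ∈ Finset.range M, (X - ρ m) = (M : ℂ) • X - G := by
        rw [Finset.sum_sub_distrib, hG, Finset.sum_const, Finset.card_range,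
          Nat.cast_smul_eq_nsmul]
      rw [← heq]
      exact Finset.sum_induction _ _ (fun A B hA hB => hA.add hB) Matrix.PosSemidef.zero
        (fun m hm => hXρ m (Finset.mem_range.mp hm))
    have hconj2 := hsum.mul_mul_conjTranspose_same S⁻¹
    rw [hSinvH.eq] at hconj2
    have heq2 : S⁻¹ * ((M : ℂ) • X - G) * S⁻¹ = (M : ℂ) • (S⁻¹ * X * S⁻¹) - 1 := by
      rw [Matrix.mul_sub, Matrix.sub_mul, hSGS, mul_smul_comm, smul_mul_assoc]
    rw [heq2] at hconj2
    refine le_ciInf fun i => ?_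
    have hM' : (0 : ℝ) < (M : ℝ) := by exact_mod_cast hM
    have hpsd' : (((M : ℝ) : ℂ) • (S⁻¹ * X * S⁻¹) - ((1 : ℝ) : ℂ) • 1).PosSemidef := by
      have : (((M : ℝ) : ℂ) • (S⁻¹ * X * S⁻¹) - ((1 : ℝ) : ℂ) • 1)
          = (M : ℂ) • (S⁻¹ * X * S⁻¹) - 1 := by push_cast; rw [one_smul]
      rw [this]
      exact hconj2
    have := aux_eig_ge' hY hM' hpsd' i
    simpa using this
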